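/- arXiv:2504.03126 — 2 statements merged into one kernel-verified Lean document; each statement's English description precedes it below -/
import Mathlib

section
/- Suppose a stochastic process ζ_k and functions V_k satisfy κ₁‖ζ_k‖² ≤ V_k(ζ_k) ≤ κ₂‖ζ_k‖² with κ₁, κ₂ > 0, and E[V_k(ζ_k) | ζ_{k-1}] - V_{k-1}(ζ_{k-1}) ≤ μ - σ V_{k-1}(ζ_{k-1}) for constants μ ≥ 0 and 0 < σ ≤ 1. Then E[‖ζ_k‖²] ≤ (κ₂/κ₁) E[‖ζ_0‖²] (1-σ)^k + (μ/κ₁) Σ_{i=0}^{k-1} (1-σ)^i, so the process is exponentially bounded in mean square. -/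
open MeasureTheory Filter

/-- Lemma (stochastic stability, from the paper): if `κ₁‖ζ_k‖² ≤ V_k(ζ_k) ≤ κ₂‖ζ_k‖²`
and `E[V_k(ζ_k) | ζ_{k-1}] - V_{k-1}(ζ_{k-1}) ≤ μ - σ V_{k-1}(ζ_{k-1})`, then the
process is exponentially bounded in mean square:
`E‖ζ_k‖² ≤ (κ₂/κ₁) E‖ζ_0‖² (1-σ)^k + (μ/κ₁) Σ_{i<k} (1-σ)^i`. -/
theorem stochastic_process_exponentially_bounded
    {Ω : Type*} {mΩ : MeasurableSpace Ω} (P : Measure Ω) [IsProbabilityMeasure P]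
    {n : ℕ} (ζ : ℕ → Ω → EuclideanSpace ℝ (Fin n))
    (V : ℕ → EuclideanSpace ℝ (Fin n) → ℝ)
    (hζmeas : ∀ k, Measurable (ζ k))
    (hVmeas : ∀ k, Measurable (V k))
    (hint : ∀ k, Integrable (fun ω => ‖ζ k ω‖ ^ 2) P)
    (hVint : ∀ k, Integrable (fun ω => V k (ζ k ω)) P)
    (κ₁ κ₂ μc σ : ℝ) (hκ₁ : 0 < κ₁) (hκ₂ : 0 < κ₂)
    (hμ : 0 ≤ μc) (hσ0 : 0 < σ) (hσ1 : σ ≤ 1)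
    (hlow : ∀ k ω, κ₁ * ‖ζ k ω‖ ^ 2 ≤ V k (ζ k ω))
    (hup : ∀ k ω, V k (ζ k ω) ≤ κ₂ * ‖ζ k ω‖ ^ 2)
    (hdrift : ∀ k : ℕ, 1 ≤ k →
      (P[(fun ω => V k (ζ k ω)) | MeasurableSpace.comap (ζ (k-1)) inferInstance])
        - (fun ω => V (k-1) (ζ (k-1) ω))
        ≤ᵐ[P] fun ω => μc - σ * V (k-1) (ζ (k-1) ω)) :
    ∀ k : ℕ, ∫ ω, ‖ζ k ω‖ ^ 2 ∂P ≤
      (κ₂ / κ₁) * (∫ ω, ‖ζ 0 ω‖ ^ 2 ∂P) * (1 - σ) ^ k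
        + (μc / κ₁) * ∑ i ∈ Finset.range k, (1 - σ) ^ i := by
  set W : ℕ → ℝ := fun k => ∫ ω, V k (ζ k ω) ∂P with hW
  have hm : ∀ k, MeasurableSpace.comap (ζ k) inferInstance ≤ mΩ := fun k =>
    (hζmeas k).comap_le
  have hσ' : (0:ℝ) ≤ 1 - σ := by linarith
  -- one-step recursion
  have key : ∀ j : ℕ, W (j+1) ≤ (1 - σ) * W j + μc := by
    intro j
    have hd := hdrift (j+1) (Nat.le_add_left 1 j)
    simp only [Nat.add_sub_cancel] at hd
    have hce : Integrable
        (P[(fun ω => V (j+1) (ζ (j+1) ω)) | MeasurableSpace.comap (ζ j) inferInstance]) P :=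
      integrable_condExp
    have hL : Integrable
        ((P[(fun ω => V (j+1) (ζ (j+1) ω)) | MeasurableSpace.comap (ζ j) inferInstance])
          - fun ω => V j (ζ j ω)) P := hce.sub (hVint j)
    have hR : Integrable (fun ω => μc - σ * V j (ζ j ω)) P :=
      (integrable_const μc).sub ((hVint j).const_mul σ)
    have hmono := integral_mono_ae hL hR hd
    simp only [Pi.sub_apply] at hmono
    rw [integral_sub hce (hVint j), integral_condExp (hm j)] at hmono
    rw [integral_sub (integrable_const μc) ((hVint j).const_mul σ),
      integral_const, integral_const_mul] at hmono
    simp only [probReal_univ, measure_univ, ENNReal.toReal_one, smul_eq_mul, one_mul] at hmono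
    have : W (j+1) - W j ≤ μc - σ * W j := hmono
    linarith [this]
  -- iterate
  have iter : ∀ k : ℕ, W k ≤ W 0 * (1 - σ) ^ k
      + μc * ∑ i ∈ Finset.range k, (1 - σ) ^ i := by
    intro k
    induction k with
    | zero => simp
    | succ j ih =>
      calc W (j+1) ≤ (1 - σ) * W j + μc := key j
        _ ≤ (1 - σ) * (W 0 * (1 - σ) ^ j + μc * ∑ i ∈ Finset.range j, (1 - σ) ^ i) + μc :=
            by nlinarith [mul_le_mul_of_nonneg_left ih hσ']
        _ = W 0 * (1 - σ) ^ (j+1)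
            + μc * ∑ i ∈ Finset.range (j+1), (1 - σ) ^ i := by
            rw [geom_sum_succ]; ring
  intro k
  have h1 : κ₁ * ∫ ω, ‖ζ k ω‖ ^ 2 ∂P ≤ W k := by
    rw [← integral_const_mul]
    exact integral_mono ((hint k).const_mul κ₁) (hVint k) (hlow k)
  have h0 : W 0 ≤ κ₂ * ∫ ω, ‖ζ 0 ω‖ ^ 2 ∂P := by
    rw [← integral_const_mul]
    exact integral_mono (hVint 0) ((hint 0).const_mul κ₂) (hup 0)
  have hpow : (0:ℝ) ≤ (1 - σ) ^ k := pow_nonneg hσ' k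
  have hsum : (0:ℝ) ≤ ∑ i ∈ Finset.range k, (1 - σ) ^ i :=
    Finset.sum_nonneg fun i _ => pow_nonneg hσ' i
  have := (h1.trans (iter k)).trans (by nlinarith :
    W 0 * (1 - σ) ^ k + μc * ∑ i ∈ Finset.range k, (1 - σ) ^ i ≤
    κ₂ * (∫ ω, ‖ζ 0 ω‖ ^ 2 ∂P) * (1 - σ) ^ k + μc * ∑ i ∈ Finset.range k, (1 - σ) ^ i)
  rw [div_mul_eq_mul_div, div_mul_eq_mul_div, div_mul_eq_mul_div, ← add_div,
    le_div_iff₀ hκ₁]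
  linarith
end

section
/- Let Π ≥ 0 be symmetric PSD, R > 0 symmetric PD, and define for each gain L the cost map f(L) = (A - B L)ᵀ Π (A - B L) + Lᵀ R L. Then for any fixed vector ξ, the function L ↦ ξᵀ f(L) ξ is minimized at L* = (R + Bᵀ Π B)⁻¹ Bᵀ Π A, i.e., ξᵀ f(L*) ξ ≤ ξᵀ f(L) ξ for all gains L. -/
open Matrix

private lemma lqr_aux {n m : ℕ} (A : Matrix (Fin n) (Fin n) ℝ) (B : Matrix (Fin n) (Fin m) ℝ)
    (Pi : Matrix (Fin n) (Fin n) ℝ) (R : Matrix (Fin m) (Fin m) ℝ)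
    (hPi : Pi.PosSemidef) (hR : R.PosDef) (ξ : Fin n → ℝ)
    (L Ls : Matrix (Fin m) (Fin n) ℝ)
    (hSL : (R + Bᵀ * Pi * B) * Ls = Bᵀ * Pi * A)
    (hLsS : Lsᵀ * (R + Bᵀ * Pi * B) = Aᵀ * Pi * B) :
    ξ ⬝ᵥ ((A - B * Ls)ᵀ * Pi * (A - B * Ls) + Lsᵀ * R * Ls).mulVec ξ
      ≤ ξ ⬝ᵥ ((A - B * L)ᵀ * Pi * (A - B * L) + Lᵀ * R * L).mulVec ξ := by
  have hBPB : (Bᵀ * Pi * B).PosSemidef := by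
    have := hPi.conjTranspose_mul_mul_same B
    simpa [conjTranspose_eq_transpose_of_trivial] using this
  have hSpsd : (R + Bᵀ * Pi * B).PosSemidef := hR.posSemidef.add hBPB
  -- normalized consequences of hSL / hLsS
  have hL : Lᵀ * (R * Ls) + Lᵀ * (Bᵀ * (Pi * (B * Ls))) = Lᵀ * (Bᵀ * (Pi * A)) := by
    have h := congrArg (fun X => Lᵀ * X) hSL
    simpa only [Matrix.add_mul, Matrix.mul_add, Matrix.mul_assoc] using h
  have hLs : Lsᵀ * (R * Ls) + Lsᵀ * (Bᵀ * (Pi * (B * Ls))) = Lsᵀ * (Bᵀ * (Pi * A)) := by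
    have h := congrArg (fun X => Lsᵀ * X) hSL
    simpa only [Matrix.add_mul, Matrix.mul_add, Matrix.mul_assoc] using h
  have hL2 : Lsᵀ * (R * L) + Lsᵀ * (Bᵀ * (Pi * (B * L))) = Aᵀ * (Pi * (B * L)) := by
    have h := congrArg (fun X => X * L) hLsS
    simpa only [Matrix.add_mul, Matrix.mul_add, Matrix.mul_assoc] using h
  have hLs2 : Lsᵀ * (Bᵀ * (Pi * (B * Ls))) = Aᵀ * (Pi * (B * Ls)) - Lsᵀ * (R * Ls) := by
    have h := congrArg (fun X => X * Ls) hLsS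
    simp only [Matrix.add_mul, Matrix.mul_add, Matrix.mul_assoc] at h
    rw [eq_sub_iff_add_eq, add_comm]
    exact h
  have expandf : ∀ M : Matrix (Fin m) (Fin n) ℝ,
      (A - B * M)ᵀ * Pi * (A - B * M) + Mᵀ * R * M
      = Aᵀ * (Pi * A) - Aᵀ * (Pi * (B * M)) - Mᵀ * (Bᵀ * (Pi * A))
        + Mᵀ * (Bᵀ * (Pi * (B * M))) + Mᵀ * (R * M) := by
    intro M
    simp only [transpose_sub, transpose_mul, Matrix.sub_mul, Matrix.mul_sub, Matrix.add_mul, Matrix.mul_add,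
      Matrix.mul_assoc]
    abel
  have e : (L - Ls)ᵀ * (R + Bᵀ * Pi * B) * (L - Ls)
      = (Lᵀ * (R * L) + Lᵀ * (Bᵀ * (Pi * (B * L))))
        - (Lᵀ * (R * Ls) + Lᵀ * (Bᵀ * (Pi * (B * Ls))))
        - (Lsᵀ * (R * L) + Lsᵀ * (Bᵀ * (Pi * (B * L))))
        + (Lsᵀ * (R * Ls) + Lsᵀ * (Bᵀ * (Pi * (B * Ls)))) := by
    simp only [transpose_sub, transpose_mul, Matrix.sub_mul, Matrix.mul_sub, Matrix.add_mul, Matrix.mul_add,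
      Matrix.mul_assoc]
    abel
  have key : (A - B * L)ᵀ * Pi * (A - B * L) + Lᵀ * R * L
      = ((A - B * Ls)ᵀ * Pi * (A - B * Ls) + Lsᵀ * R * Ls)
        + (L - Ls)ᵀ * (R + Bᵀ * Pi * B) * (L - Ls) := by
    rw [expandf L, expandf Ls, e, hL, hLs, hL2, hLs2]
    abel
  have hpsd : ((L - Ls)ᵀ * (R + Bᵀ * Pi * B) * (L - Ls)).PosSemidef := by
    have := hSpsd.conjTranspose_mul_mul_same (L - Ls)
    simpa [conjTranspose_eq_transpose_of_trivial] using this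
  have hnn : 0 ≤ ξ ⬝ᵥ ((L - Ls)ᵀ * (R + Bᵀ * Pi * B) * (L - Ls)).mulVec ξ := by
    simpa using hpsd.dotProduct_mulVec_nonneg ξ
  calc ξ ⬝ᵥ ((A - B * Ls)ᵀ * Pi * (A - B * Ls) + Lsᵀ * R * Ls).mulVec ξ
      ≤ ξ ⬝ᵥ ((A - B * Ls)ᵀ * Pi * (A - B * Ls) + Lsᵀ * R * Ls).mulVec ξ
        + ξ ⬝ᵥ ((L - Ls)ᵀ * (R + Bᵀ * Pi * B) * (L - Ls)).mulVec ξ :=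
        le_add_of_nonneg_right hnn
    _ = ξ ⬝ᵥ ((A - B * L)ᵀ * Pi * (A - B * L) + Lᵀ * R * L).mulVec ξ := by
        rw [key]; simp [add_mulVec, dotProduct_add]

/-- Completion of squares: with `Π` symmetric PSD and `R` symmetric PD, the map
`L ↦ ξᵀ [(A - B L)ᵀ Π (A - B L) + Lᵀ R L] ξ` is minimized at
`L* = (R + Bᵀ Π B)⁻¹ Bᵀ Π A`. -/
theorem lqr_gain_minimizes_quadratic_cost
    {n m : ℕ} (A : Matrix (Fin n) (Fin n) ℝ) (B : Matrix (Fin n) (Fin m) ℝ)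
    (Pi : Matrix (Fin n) (Fin n) ℝ) (R : Matrix (Fin m) (Fin m) ℝ)
    (hPi : Pi.PosSemidef) (hR : R.PosDef) (ξ : Fin n → ℝ) :
    ∀ L : Matrix (Fin m) (Fin n) ℝ,
      letI Lstar := (R + Bᵀ * Pi * B)⁻¹ * (Bᵀ * Pi * A)
      ξ ⬝ᵥ ((A - B * Lstar)ᵀ * Pi * (A - B * Lstar) + Lstarᵀ * R * Lstar).mulVec ξ
        ≤ ξ ⬝ᵥ ((A - B * L)ᵀ * Pi * (A - B * L) + Lᵀ * R * L).mulVec ξ := by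
  intro L
  have hBPB : (Bᵀ * Pi * B).PosSemidef := by
    have := hPi.conjTranspose_mul_mul_same B
    simpa [conjTranspose_eq_transpose_of_trivial] using this
  have hS : (R + Bᵀ * Pi * B).PosDef := hR.add_posSemidef hBPB
  have hdet : IsUnit (R + Bᵀ * Pi * B).det := (isUnit_iff_isUnit_det _).1 hS.isUnit
  have hSt : (R + Bᵀ * Pi * B)ᵀ = R + Bᵀ * Pi * B := by
    have := hS.isHermitian
    rwa [Matrix.IsHermitian, conjTranspose_eq_transpose_of_trivial] at this
  have hPit : Piᵀ = Pi := by
    have := hPi.isHermitian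
    rwa [Matrix.IsHermitian, conjTranspose_eq_transpose_of_trivial] at this
  have hSL : (R + Bᵀ * Pi * B) * ((R + Bᵀ * Pi * B)⁻¹ * (Bᵀ * Pi * A)) = Bᵀ * Pi * A := by
    rw [← Matrix.mul_assoc, Matrix.mul_nonsing_inv _ hdet, Matrix.one_mul]
  have hLsS : ((R + Bᵀ * Pi * B)⁻¹ * (Bᵀ * Pi * A))ᵀ * (R + Bᵀ * Pi * B) = Aᵀ * Pi * B := by
    rw [transpose_mul, Matrix.transpose_nonsing_inv, hSt, Matrix.mul_assoc,
      Matrix.nonsing_inv_mul _ hdet, Matrix.mul_one, transpose_mul, transpose_mul,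
      transpose_transpose, hPit, Matrix.mul_assoc]
  exact lqr_aux A B Pi R hPi hR ξ L _ hSL hLsS
end
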